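/- Let σ be a type of states, Λ a type of labels, step : Λ → σ → σ → Prop a labeled transition relation, and P : Λ → σ → σ → Prop an access control policy on steps. Say P is stable under shift if for every swap witnessing sequential independence — i.e., whenever step r a b, step r' b c, step r' a d, and step r d c — one has (P r a b ↔ P r d c) and (P r' b c ↔ P r' a d). Let r_src and r_sink be labels and w a list of labels with r_src ∉ w and r_sink ∉ w, such that every label occurring in w is sequentially independent from r_sink, and suppose P is stable under shift. Suppose there is an atomic indirect violation: states a, b, c, d with step r_src a b, a run from b to c over w, step r_sink c d, and ¬ P r_sink c d. Then there is a direct violation starting from the same state: there exists a state b'' with step r_src a b, step r_sink b b'', a run from b'' to d over w, and ¬ P r_sink b b''. In particular, under these conditions every atomic indirect broken-access-control vulnerability reduces to a direct one, and the shifted sink step still violates the policy. -/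

import Mathlib

/-- A run from `a` to `b` over a list of labels. -/
inductive Run {σ Λ : Type*} (step : Λ → σ → σ → Prop) : σ → List Λ → σ → Prop
  | nil (a : σ) : Run step a [] a
  | cons {a c b : σ} {r : Λ} {l : List Λ} :
      step r a c → Run step c l b → Run step a (r :: l) b

/-- Labels `r` and `r'` are sequentially independent if two consecutive steps
`r` then `r'` can be reversed, preserving endpoints. -/
def SeqIndep {σ Λ : Type*} (step : Λ → σ → σ → Prop) (r r' : Λ) : Prop :=
  ∀ a b c : σ, step r a b → step r' b c → ∃ d : σ, step r' a d ∧ step r d c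

/-- A policy `P` is stable under shift if swapping a sequentially independent
pair of steps preserves the policy value of each of the two steps. -/
def StableUnderShift {σ Λ : Type*} (step : Λ → σ → σ → Prop)
    (P : Λ → σ → σ → Prop) : Prop :=
  ∀ (r r' : Λ) (a b c d : σ), step r a b → step r' b c → step r' a d →
    step r d c → (P r a b ↔ P r d c) ∧ (P r' b c ↔ P r' a d)

/-- Soundness for vulnerabilities (condition (2)): under stability under shift,
every atomic indirect broken-access-control violation reduces to a direct one
(the sink step is shifted backwards across the intermediate steps), and the
shifted sink step still violates the policy. -/
theorem indirect_to_direct_violation_sink {σ Λ : Type*}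
    (step : Λ → σ → σ → Prop) (P : Λ → σ → σ → Prop)
    (r_src r_sink : Λ) (w : List Λ)
    (hsrc_notin : r_src ∉ w) (hsink_notin : r_sink ∉ w)
    (hindep : ∀ r ∈ w, SeqIndep step r r_sink)
    (hstable : StableUnderShift step P)
    (a b c d : σ)
    (hstep_src : step r_src a b) (hrun : Run step b w c)
    (hstep_sink : step r_sink c d) (hviol : ¬ P r_sink c d) :
    ∃ b'' : σ, step r_src a b ∧ step r_sink b b'' ∧
      Run step b'' w d ∧ ¬ P r_sink b b'' := by
  suffices h : ∀ (w : List Λ) (b c : σ), (∀ r ∈ w, SeqIndep step r r_sink) →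
      Run step b w c → step r_sink c d → ¬ P r_sink c d →
      ∃ b'' : σ, step r_sink b b'' ∧ Run step b'' w d ∧ ¬ P r_sink b b'' by
    obtain ⟨b'', h1, h2, h3⟩ := h w b c hindep hrun hstep_sink hviol
    exact ⟨b'', hstep_src, h1, h2, h3⟩
  intro w
  induction w with
  | nil =>
    intro b c _ hrun hsink hviol
    cases hrun
    exact ⟨d, hsink, Run.nil d, hviol⟩
  | cons r l ih =>
    intro b c hind hrun hsink hviol
    cases hrun with
    | @cons _ x _ _ _ hstep hrun' =>
      obtain ⟨x'', hx1, hx2, hx3⟩ :=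
        ih x c (fun r hr => hind r (List.mem_cons_of_mem _ hr)) hrun' hsink hviol
      obtain ⟨e, he1, he2⟩ := hind r List.mem_cons_self b x x'' hstep hx1
      have := hstable r r_sink b x x'' e hstep hx1 he1 he2
      exact ⟨e, he1, Run.cons he2 hx2, fun hp => hx3 (this.2.mpr hp)⟩
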